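/- Let Γ be the union of an increasing chain of subgroups Γ_1 ≤ Γ_2 ≤ Γ_3 ≤ ⋯. Then genrk(Γ) ≤ liminf_{i→∞} genrk(Γ_i). -/

import Mathlib

open scoped commutatorElement

/-- The mixed commutator length `cl_{G,N}` (∞ if not a product of mixed commutators). -/
noncomputable def clGN {G : Type*} [Group G] (N : Subgroup G) (x : G) : ℕ∞ :=
  sInf {n : ℕ∞ | ∃ k : ℕ, n = k ∧ ∃ g v : Fin k → G, (∀ i, v i ∈ N) ∧
    x = (List.ofFn fun i => ⁅g i, v i⁆).prod}

/-- The rank of a subgroup: minimal size of a generating set. -/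
noncomputable def rk {G : Type*} [Group G] (H : Subgroup G) : ℕ∞ :=
  sInf {n : ℕ∞ | ∃ S : Finset G, Subgroup.closure (S : Set G) = H ∧ n = S.card}

/-- The intermediate rank `intrk^Γ(Λ) = inf {rk Θ | Λ ≤ Θ ≤ Γ}`. -/
noncomputable def intrk {G : Type*} [Group G] (Λ : Subgroup G) : ℕ∞ :=
  sInf {n : ℕ∞ | ∃ Θ : Subgroup G, Λ ≤ Θ ∧ n = rk Θ}

/-- The general rank in the sense of Malcev. -/
noncomputable def genrk (G : Type*) [Group G] : ℕ∞ :=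
  sSup {n : ℕ∞ | ∃ Λ : Subgroup G, Λ.FG ∧ n = intrk Λ}

/-- The special rank in the sense of Malcev. -/
noncomputable def sperk (G : Type*) [Group G] : ℕ∞ :=
  sSup {n : ℕ∞ | ∃ Λ : Subgroup G, Λ.FG ∧ n = rk Λ}

lemma rk_map_le' {G H : Type*} [Group G] [Group H] (f : G →* H) (Θ : Subgroup G) :
    rk (Θ.map f) ≤ rk Θ := by
  classical
  apply le_sInf
  rintro n ⟨T, hT, rfl⟩
  calc rk (Θ.map f) ≤ ((T.image f).card : ℕ∞) := by
        refine sInf_le ⟨T.image f, ?_, rfl⟩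
        rw [Finset.coe_image, ← hT, MonoidHom.map_closure]
    _ ≤ (T.card : ℕ∞) := by exact_mod_cast Finset.card_image_le

/-- general rank of an increasing union of subgroups is at most the
liminf of the general ranks. -/
theorem genrk_iUnion_le_liminf {Γ : Type*} [Group Γ] (Γs : ℕ → Subgroup Γ)
    (hmono : Monotone Γs) (hunion : (⋃ i, ((Γs i : Subgroup Γ) : Set Γ)) = Set.univ) :
    genrk Γ ≤ Filter.liminf (fun i => genrk ↥(Γs i)) Filter.atTop := by
  classical
  apply sSup_le
  rintro n ⟨Λ, ⟨S, hS⟩, rfl⟩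
  have hmem : ∀ s ∈ S, ∃ i, s ∈ Γs i := by
    intro s _
    have : s ∈ ⋃ i, ((Γs i : Subgroup Γ) : Set Γ) := hunion ▸ Set.mem_univ s
    simpa using this
  choose f hf using hmem
  set i₀ := S.attach.sup (fun s => f s.1 s.2) with hi₀
  rw [Filter.liminf_eq_iSup_iInf_of_nat]
  refine le_iSup_of_le i₀ (le_iInf fun j => le_iInf fun hj => ?_)
  have hSj : (S : Set Γ) ⊆ Γs j := by
    intro s hs
    exact hmono (le_trans (Finset.le_sup (Finset.mem_attach S ⟨s, hs⟩)) hj) (hf s hs)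
  set S' : Finset (Γs j) := S.attach.image (fun s => (⟨s.1, hSj s.2⟩ : Γs j)) with hS'
  set Λ' : Subgroup (Γs j) := Subgroup.closure (S' : Set (Γs j)) with hΛ'
  have hmap : Λ'.map (Γs j).subtype = Λ := by
    rw [hΛ', MonoidHom.map_closure, ← hS]
    congr 1
    ext x
    constructor
    · rintro ⟨y, hy, rfl⟩
      simp only [hS', Finset.coe_image, Set.mem_image, Finset.mem_coe, Finset.mem_attach,
        true_and] at hy
      obtain ⟨⟨z, hz⟩, rfl⟩ := hy
      exact hz
    · intro hx
      exact ⟨⟨x, hSj hx⟩, by simp [hS']; exact hx, rfl⟩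
  have h1 : intrk Λ ≤ intrk Λ' := by
    apply le_sInf
    rintro m ⟨Θ, hΘ, rfl⟩
    have hle : Λ ≤ Θ.map (Γs j).subtype := hmap ▸ Subgroup.map_mono hΘ
    exact le_trans (sInf_le ⟨Θ.map (Γs j).subtype, hle, rfl⟩) (rk_map_le' _ _)
  exact h1.trans (le_sSup ⟨Λ', ⟨S', rfl⟩, rfl⟩)
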